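/- Let w : {0,…,n}×{0,…,m} → ℝ be a solution of the discrete dorsal-closure scheme: for all interior k and all j < m, (D_t w)^j_k = (1/(1 + ((D₀w)^j_k)²)) · ( (D²w)^j_k + (D₀w)^j_k / L[w^j] ), with boundary and initial conditions w^j_n = 0, w^{j+1}_0 = w^j_0 + δt (D_t w)^j_1, and prescribed initial data w^0. If (δu)² ≥ 2δt and ρ₀ ≥ δu · (1 + ‖(D₊w)^0‖_{L^∞}²), then for all j < m, ‖(D₀w)^{j+1}‖_{L^∞} ≤ ‖(D₊w)^{j+1}‖_{L^∞} ≤ ‖(D₊w)^0‖_{L^∞}. -/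
import Mathlib


noncomputable section

open Finset

/-- The forward difference operator `(D₊v)_k = (v_{k+1} - v_k)/δu`. -/
def dplus (δu : ℝ) (v : ℕ → ℝ) (k : ℕ) : ℝ := (v (k + 1) - v k) / δu

/-- The centred difference operator `(D₀v)_k = (v_{k+1} - v_{k-1})/(2δu)`
(used only at interior indices `k ≥ 1`). -/
def d0 (δu : ℝ) (v : ℕ → ℝ) (k : ℕ) : ℝ := (v (k + 1) - v (k - 1)) / (2 * δu)

/-- The second difference operator
`(D²v)_k = (v_{k+1} - 2v_k + v_{k-1})/δu²`. -/
def d2 (δu : ℝ) (v : ℕ → ℝ) (k : ℕ) : ℝ :=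
  (v (k + 1) - 2 * v k + v (k - 1)) / δu ^ 2

/-- The forward time difference operator `(D_t w)^j_k = (w^{j+1}_k - w^j_k)/δt`
for a mesh function `w` (time index first). -/
def dtime (δt : ℝ) (w : ℕ → ℕ → ℝ) (j k : ℕ) : ℝ := (w (j + 1) k - w j k) / δt

/-- The discrete length functional
`L[v] = δu Σ_{i<n} √(1 + ((D₊v)_i)²)`. -/
def dlen (δu : ℝ) (n : ℕ) (v : ℕ → ℝ) : ℝ :=
  δu * ∑ i ∈ Finset.range n, Real.sqrt (1 + dplus δu v i ^ 2)

/-- The discrete sup-norm (maximum of absolute values) over a finite set of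
spatial indices. -/
def supOn (s : Finset ℕ) (v : ℕ → ℝ) : ℝ := s.fold max 0 (fun k => |v k|)

lemma supOn_nonneg (s : Finset ℕ) (v : ℕ → ℝ) : 0 ≤ supOn s v :=
  (Finset.le_fold_max _).2 (Or.inl le_rfl)

lemma abs_le_supOn {s : Finset ℕ} {k : ℕ} (v : ℕ → ℝ) (h : k ∈ s) :
    |v k| ≤ supOn s v :=
  (Finset.le_fold_max _).2 (Or.inr ⟨k, h, le_rfl⟩)

lemma supOn_le {s : Finset ℕ} {c : ℝ} (v : ℕ → ℝ) (hc : 0 ≤ c)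
    (h : ∀ k ∈ s, |v k| ≤ c) : supOn s v ≤ c :=
  (Finset.fold_max_le _).2 ⟨hc, h⟩

lemma d0_eq (δu : ℝ) (hδu : δu ≠ 0) (v : ℕ → ℝ) (q : ℕ) :
    d0 δu v (q + 1) = (dplus δu v q + dplus δu v (q + 1)) / 2 := by
  simp only [d0, dplus, Nat.add_sub_cancel]
  rw [div_add_div _ _ hδu hδu, div_div]
  rw [div_eq_div_iff (by simp [hδu]) (by simp [hδu])]
  ring

lemma d2_eq (δu : ℝ) (hδu : δu ≠ 0) (v : ℕ → ℝ) (q : ℕ) :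
    d2 δu v (q + 1) = (dplus δu v (q + 1) - dplus δu v q) / δu := by
  simp only [d2, dplus, Nat.add_sub_cancel]
  rw [div_sub_div _ _ hδu hδu, div_div]
  rw [div_eq_div_iff (by positivity) (by simp [hδu])]
  ring

lemma glue_interior (δu δt u1 u2 Fa Fb M : ℝ) (hδu : δu ≠ 0)
    (h : |(u2 - u1) / δu + δt / δu * (Fb - Fa)| ≤ M) :
    |(u2 + δt * Fb - (u1 + δt * Fa)) / δu| ≤ M := by
  have e : (u2 + δt * Fb - (u1 + δt * Fa)) / δu
      = (u2 - u1) / δu + δt / δu * (Fb - Fa) := by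
    field_simp
    ring
  rw [e]; exact h

lemma glue_boundary (δu δt u1 Fa M : ℝ) (hδu : δu ≠ 0)
    (h : |(0 - u1) / δu - δt / δu * Fa| ≤ M) :
    |(0 - (u1 + δt * Fa)) / δu| ≤ M := by
  have e : (0 - (u1 + δt * Fa)) / δu = (0 - u1) / δu - δt / δu * Fa := by
    field_simp
    ring
  rw [e]; exact h

set_option maxHeartbeats 1000000 in
lemma core_interior (δu δt L M g0 g1 g2 : ℝ) (hδu : 0 < δu) (hδt : 0 < δt)
    (hstep : 2 * δt ≤ δu ^ 2) (hLb : δu * (1 + M ^ 2) ≤ L)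
    (h0 : |g0| ≤ M) (h1 : |g1| ≤ M) (h2 : |g2| ≤ M) :
    |g1 + δt / δu *
        ((1 + ((g1 + g2) / 2) ^ 2)⁻¹ * ((g2 - g1) / δu + (g1 + g2) / 2 / L) -
         (1 + ((g0 + g1) / 2) ^ 2)⁻¹ * ((g1 - g0) / δu + (g0 + g1) / 2 / L))| ≤ M := by
  have hM : 0 ≤ M := (abs_nonneg g1).trans h1
  have hL0 : 0 < L := lt_of_lt_of_le (by positivity) hLb
  obtain ⟨h0l, h0r⟩ := abs_le.1 h0
  obtain ⟨h1l, h1r⟩ := abs_le.1 h1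
  obtain ⟨h2l, h2r⟩ := abs_le.1 h2
  set x : ℝ := (g1 + g2) / 2 with hxd
  set y : ℝ := (g0 + g1) / 2 with hyd
  set a : ℝ := (1 + y ^ 2)⁻¹ with had
  set b : ℝ := (1 + x ^ 2)⁻¹ with hbd
  set c : ℝ := (1 - x * y) * a * b with hcd
  set s : ℝ := δt / δu ^ 2 with hsd
  set r : ℝ := δu / (2 * L) with hrd
  have hxM : |x| ≤ M := abs_le.2 ⟨by rw [hxd]; linarith, by rw [hxd]; linarith⟩
  have hyM : |y| ≤ M := abs_le.2 ⟨by rw [hyd]; linarith, by rw [hyd]; linarith⟩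
  have ha0 : 0 < a := by rw [had]; positivity
  have hb0 : 0 < b := by rw [hbd]; positivity
  have hae : a * (1 + y ^ 2) = 1 := by rw [had]; field_simp
  have hbe : b * (1 + x ^ 2) = 1 := by rw [hbd]; field_simp
  have ha1 : a ≤ 1 := by nlinarith [sq_nonneg y]
  have hb1 : b ≤ 1 := by nlinarith [sq_nonneg x]
  have hs0 : 0 < s := by rw [hsd]; positivity
  have hr0 : 0 < r := by rw [hrd]; positivity
  have hs2 : s ≤ 1 / 2 := by
    rw [hsd, div_le_iff₀ (by positivity)]
    linarith
  have hr2 : r * (1 + M ^ 2) ≤ 1 / 2 := by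
    rw [hrd, div_mul_eq_mul_div, div_le_iff₀ (by positivity)]
    linarith
  have hxy : |x * y| ≤ M * M := by
    rw [abs_mul]; exact mul_le_mul hxM hyM (abs_nonneg y) hM
  obtain ⟨hxyl, hxyr⟩ := abs_le.1 hxy
  have hcabs : |c| ≤ (1 + M ^ 2) * (a * b) := by
    rw [hcd, abs_mul, abs_mul, abs_of_pos ha0, abs_of_pos hb0]
    have h1xy : |1 - x * y| ≤ 1 + M ^ 2 := abs_le.2 ⟨by nlinarith, by nlinarith⟩
    nlinarith [mul_le_mul_of_nonneg_right h1xy (mul_nonneg ha0.le hb0.le),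
      mul_pos ha0 hb0]
  have hrc : r * |c| ≤ a * b / 2 := by
    have t1 : r * |c| ≤ r * ((1 + M ^ 2) * (a * b)) :=
      mul_le_mul_of_nonneg_left hcabs hr0.le
    have t2 : (r * (1 + M ^ 2)) * (a * b) ≤ (1 / 2) * (a * b) :=
      mul_le_mul_of_nonneg_right hr2 (mul_nonneg ha0.le hb0.le)
    nlinarith
  have hA : 0 ≤ a - r * c := by
    have t3 : a * b ≤ a * 1 := mul_le_mul_of_nonneg_left hb1 ha0.le
    have t4 : r * c ≤ r * |c| := mul_le_mul_of_nonneg_left (le_abs_self c) hr0.le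
    nlinarith
  have hC : 0 ≤ b + r * c := by
    have t3 : a * b ≤ 1 * b := mul_le_mul_of_nonneg_right ha1 hb0.le
    have t4 : r * (-|c|) ≤ r * c := mul_le_mul_of_nonneg_left (neg_abs_le c) hr0.le
    nlinarith
  have hB : 0 ≤ 1 - s * (a + b) := by
    nlinarith [mul_le_mul hs2 (show a + b ≤ 2 by linarith) (by positivity) (by norm_num)]
  have hδu' : δu ≠ 0 := ne_of_gt hδu
  have hL' : L ≠ 0 := ne_of_gt hL0
  have hne1 : (1 + ((g1 + g2) / 2 : ℝ) ^ 2) ≠ 0 := by positivity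
  have hne2 : (1 + ((g0 + g1) / 2 : ℝ) ^ 2) ≠ 0 := by positivity
  have hkey : b * x - a * y = c * (x - y) := by
    have e : b * x - a * y = a * b * (x * (1 + y ^ 2) - y * (1 + x ^ 2)) := by
      calc b * x - a * y = (a * (1 + y ^ 2)) * (b * x) - (b * (1 + x ^ 2)) * (a * y) := by
            rw [hae, hbe]; ring
        _ = a * b * (x * (1 + y ^ 2) - y * (1 + x ^ 2)) := by ring
    rw [e, hcd]; ring
  have e0 : g1 + δt / δu * (b * ((g2 - g1) / δu + x / L) -
      a * ((g1 - g0) / δu + y / L))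
      = g1 + s * (b * (g2 - g1) - a * (g1 - g0)) + 2 * s * r * (b * x - a * y) := by
    rw [hsd, hrd]
    field_simp
    ring
  have hexpr : g1 + δt / δu * (b * ((g2 - g1) / δu + x / L) -
      a * ((g1 - g0) / δu + y / L))
      = s * (a - r * c) * g0 + (1 - s * (a + b)) * g1 + s * (b + r * c) * g2 := by
    rw [e0, hkey, hxd, hyd]
    ring
  rw [hexpr, abs_le]
  have hA' : 0 ≤ s * (a - r * c) := mul_nonneg hs0.le hA
  have hC' : 0 ≤ s * (b + r * c) := mul_nonneg hs0.le hC
  constructor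
  · have p0 := mul_le_mul_of_nonneg_left h0l hA'
    have p1 := mul_le_mul_of_nonneg_left h1l hB
    have p2 := mul_le_mul_of_nonneg_left h2l hC'
    linarith [p0, p1, p2]
  · have p0 := mul_le_mul_of_nonneg_left h0r hA'
    have p1 := mul_le_mul_of_nonneg_left h1r hB
    have p2 := mul_le_mul_of_nonneg_left h2r hC'
    linarith [p0, p1, p2]

set_option maxHeartbeats 1000000 in
lemma core_boundary (δu δt L M g0 g1 : ℝ) (hδu : 0 < δu) (hδt : 0 < δt)
    (hstep : 2 * δt ≤ δu ^ 2) (hLb : δu * (1 + M ^ 2) ≤ L)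
    (h0 : |g0| ≤ M) (h1 : |g1| ≤ M) :
    |g1 - δt / δu *
        ((1 + ((g0 + g1) / 2) ^ 2)⁻¹ * ((g1 - g0) / δu + (g0 + g1) / 2 / L))| ≤ M := by
  have hM : 0 ≤ M := (abs_nonneg g1).trans h1
  have hL0 : 0 < L := lt_of_lt_of_le (by positivity) hLb
  obtain ⟨h0l, h0r⟩ := abs_le.1 h0
  obtain ⟨h1l, h1r⟩ := abs_le.1 h1
  set y : ℝ := (g0 + g1) / 2 with hyd
  set a : ℝ := (1 + y ^ 2)⁻¹ with had
  set s : ℝ := δt / δu ^ 2 with hsd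
  set r : ℝ := δu / (2 * L) with hrd
  have ha0 : 0 < a := by rw [had]; positivity
  have hae : a * (1 + y ^ 2) = 1 := by rw [had]; field_simp
  have ha1 : a ≤ 1 := by nlinarith [sq_nonneg y]
  have hs0 : 0 < s := by rw [hsd]; positivity
  have hr0 : 0 < r := by rw [hrd]; positivity
  have hs2 : s ≤ 1 / 2 := by
    rw [hsd, div_le_iff₀ (by positivity)]
    linarith
  have hr1 : r ≤ 1 / 2 := by
    rw [hrd, div_le_iff₀ (by positivity)]
    nlinarith [sq_nonneg M]
  have hδu' : δu ≠ 0 := ne_of_gt hδu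
  have hL' : L ≠ 0 := ne_of_gt hL0
  have hne2 : (1 + ((g0 + g1) / 2 : ℝ) ^ 2) ≠ 0 := by positivity
  have e0 : g1 - δt / δu * (a * ((g1 - g0) / δu + y / L))
      = g1 - s * a * (g1 - g0) - 2 * s * r * (a * y) := by
    rw [hsd, hrd]
    field_simp
    ring
  have hexpr : g1 - δt / δu * (a * ((g1 - g0) / δu + y / L))
      = (s * a * (1 - r)) * g0 + (1 - s * a * (1 + r)) * g1 := by
    rw [e0, hyd]
    ring
  have hA' : 0 ≤ s * a * (1 - r) :=
    mul_nonneg (mul_nonneg hs0.le ha0.le) (by linarith)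
  have hsa : s * a ≤ 1 / 2 := by nlinarith
  have hB' : 0 ≤ 1 - s * a * (1 + r) := by
    have t2 : s * a * (1 + r) ≤ (1 / 2) * (3 / 2) := by
      have := mul_le_mul hsa (show (1 + r) ≤ 3 / 2 by linarith)
        (by positivity) (by norm_num)
      linarith
    linarith
  rw [hexpr, abs_le]
  constructor
  · have p0 := mul_le_mul_of_nonneg_left h0l hA'
    have p1 := mul_le_mul_of_nonneg_left h1l hB'
    nlinarith [p0, p1, mul_nonneg (mul_nonneg (mul_nonneg hs0.le ha0.le) hr0.le) hM]
  · have p0 := mul_le_mul_of_nonneg_left h0r hA'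
    have p1 := mul_le_mul_of_nonneg_left h1r hB'
    nlinarith [p0, p1, mul_nonneg (mul_nonneg (mul_nonneg hs0.le ha0.le) hr0.le) hM]

set_option maxHeartbeats 1000000 in
/-- Theorem 6.6, maximum principle for the discrete
gradient: if `w` solves the discrete dorsal-closure scheme with boundary
conditions `w^j_n = 0` and `w^{j+1}_0 = w^j_0 + δt (D_t w)^j_1`, and the steps
satisfy `δu² ≥ 2δt` and `ρ₀ ≥ δu (1 + ‖(D₊w)^0‖_∞²)`, then for all `j < m`
`‖(D₀w)^{j+1}‖_∞ ≤ ‖(D₊w)^{j+1}‖_∞ ≤ ‖(D₊w)^0‖_∞`. -/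
theorem discrete_gradient_max_principle (ρ₀ T : ℝ) (hρ : 0 < ρ₀) (hT : 0 < T)
    (n m : ℕ) (hn : 0 < n) (hm : 0 < m) (w : ℕ → ℕ → ℝ)
    (hscheme : ∀ j, j < m → ∀ k, 0 < k → k < n →
      dtime (T / m) w j k =
        (1 + d0 (ρ₀ / n) (w j) k ^ 2)⁻¹ *
          (d2 (ρ₀ / n) (w j) k + d0 (ρ₀ / n) (w j) k / dlen (ρ₀ / n) n (w j)))
    (hbcD : ∀ j, j ≤ m → w j n = 0)
    (hbcN : ∀ j, j < m → w (j + 1) 0 = w j 0 + (T / m) * dtime (T / m) w j 1)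
    (hstep : (ρ₀ / n) ^ 2 ≥ 2 * (T / m))
    (hsmall : ρ₀ ≥ (ρ₀ / n) *
      (1 + supOn (Finset.range n) (dplus (ρ₀ / n) (w 0)) ^ 2)) :
    ∀ j, j < m →
      supOn (Finset.Icc 1 (n - 1)) (d0 (ρ₀ / n) (w (j + 1))) ≤
          supOn (Finset.range n) (dplus (ρ₀ / n) (w (j + 1))) ∧
      supOn (Finset.range n) (dplus (ρ₀ / n) (w (j + 1))) ≤
          supOn (Finset.range n) (dplus (ρ₀ / n) (w 0)) := by
  have hn0 : (0:ℝ) < (n:ℝ) := by exact_mod_cast hn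
  have hm0 : (0:ℝ) < (m:ℝ) := by exact_mod_cast hm
  set δu : ℝ := ρ₀ / (n:ℝ) with hδud
  set δt : ℝ := T / (m:ℝ) with hδtd
  set M : ℝ := supOn (Finset.range n) (dplus δu (w 0)) with hMd
  have hδu0 : 0 < δu := by rw [hδud]; positivity
  have hδt0 : 0 < δt := by rw [hδtd]; positivity
  have hM0 : 0 ≤ M := by rw [hMd]; exact supOn_nonneg _ _
  have hstep' : 2 * δt ≤ δu ^ 2 := hstep
  have hL_all : ∀ j, δu * (1 + M ^ 2) ≤ dlen δu n (w j) := by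
    intro j
    have h1 : (n:ℝ) ≤ ∑ i ∈ Finset.range n, Real.sqrt (1 + dplus δu (w j) i ^ 2) := by
      calc (n:ℝ) = ∑ _i ∈ Finset.range n, (1:ℝ) := by simp
        _ ≤ _ := by
          refine Finset.sum_le_sum fun i _ => ?_
          calc (1:ℝ) = Real.sqrt 1 := Real.sqrt_one.symm
            _ ≤ _ := Real.sqrt_le_sqrt (by nlinarith [sq_nonneg (dplus δu (w j) i)])
    have h2 : δu * (n:ℝ) ≤ dlen δu n (w j) := by
      rw [dlen]; exact mul_le_mul_of_nonneg_left h1 hδu0.le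
    have h3 : δu * (n:ℝ) = ρ₀ := by rw [hδud]; field_simp
    linarith
  have key : ∀ j, j ≤ m → ∀ k, k < n → |dplus δu (w j) k| ≤ M := by
    intro j
    induction j with
    | zero =>
      intro _ k hk
      rw [hMd]
      exact abs_le_supOn _ (Finset.mem_range.2 hk)
    | succ j ih =>
      intro hj k hk
      have hjm : j < m := lt_of_lt_of_le (Nat.lt_succ_self j) hj
      have ihj : ∀ k, k < n → |dplus δu (w j) k| ≤ M := fun k hk => ih hjm.le k hk
      set L : ℝ := dlen δu n (w j) with hLd
      have hLb : δu * (1 + M ^ 2) ≤ L := by rw [hLd]; exact hL_all j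
      have hL0 : 0 < L := lt_of_lt_of_le (by positivity) hLb
      have hw : ∀ i, 0 < i → i < n →
          w (j + 1) i = w j i + δt * ((1 + d0 δu (w j) i ^ 2)⁻¹ *
            (d2 δu (w j) i + d0 δu (w j) i / L)) := by
        intro i hi1 hi2
        have h := hscheme j hjm i hi1 hi2
        rw [dtime, div_eq_iff hδt0.ne'] at h
        rw [hLd]
        linarith [h]
      rcases Nat.eq_zero_or_pos k with rfl | hk1
      · have hb := hbcN j hjm
        rw [dtime] at hb
        have e : dplus δu (w (j + 1)) 0 = dplus δu (w j) 0 := by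
          simp only [dplus, zero_add]
          rw [hb]
          have h1 : δt ≠ 0 := hδt0.ne'
          have h2 : δu ≠ 0 := hδu0.ne'
          field_simp
          ring
        rw [e]; exact ihj 0 hn
      · obtain ⟨q, rfl⟩ : ∃ q, k = q + 1 := ⟨k - 1, by omega⟩
        have e1 := hw (q + 1) q.succ_pos hk
        rw [d0_eq δu hδu0.ne' (w j) q, d2_eq δu hδu0.ne' (w j) q] at e1
        by_cases hlt : q + 1 + 1 < n
        · have e2 := hw (q + 1 + 1) (q + 1).succ_pos hlt
          rw [d0_eq δu hδu0.ne' (w j) (q + 1), d2_eq δu hδu0.ne' (w j) (q + 1)] at e2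
          have hcore := core_interior δu δt L M (dplus δu (w j) q)
            (dplus δu (w j) (q + 1)) (dplus δu (w j) (q + 1 + 1))
            hδu0 hδt0 hstep' hLb (ihj q (by omega)) (ihj (q + 1) hk)
            (ihj (q + 1 + 1) hlt)
          simp only [dplus] at hcore e1 e2 ⊢
          rw [e2, e1]
          exact glue_interior δu δt _ _ _ _ M hδu0.ne' hcore
        · have hqn : q + 1 + 1 = n := by omega
          have hz1 : w (j + 1) (q + 1 + 1) = 0 := by rw [hqn]; exact hbcD (j + 1) hj
          have hz0 : w j (q + 1 + 1) = 0 := by rw [hqn]; exact hbcD j hjm.le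
          have hcore := core_boundary δu δt L M (dplus δu (w j) q)
            (dplus δu (w j) (q + 1)) hδu0 hδt0 hstep' hLb
            (ihj q (by omega)) (ihj (q + 1) hk)
          simp only [dplus] at hcore e1 ⊢
          rw [hz0] at hcore e1
          rw [hz1, e1]
          exact glue_boundary δu δt _ _ M hδu0.ne' hcore
  intro j hj
  constructor
  · refine supOn_le _ (supOn_nonneg _ _) ?_
    intro k hk
    rw [Finset.mem_Icc] at hk
    obtain ⟨q, rfl⟩ : ∃ q, k = q + 1 := ⟨k - 1, by omega⟩
    rw [d0_eq δu hδu0.ne' (w (j + 1)) q]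
    have a0 := abs_le_supOn (dplus δu (w (j + 1))) (Finset.mem_range.2 (show q < n by omega))
    have a1 := abs_le_supOn (dplus δu (w (j + 1)))
      (Finset.mem_range.2 (show q + 1 < n by omega))
    have t := abs_add_le (dplus δu (w (j + 1)) q) (dplus δu (w (j + 1)) (q + 1))
    have e : |(dplus δu (w (j + 1)) q + dplus δu (w (j + 1)) (q + 1)) / 2|
        = |dplus δu (w (j + 1)) q + dplus δu (w (j + 1)) (q + 1)| / 2 := by
      rw [abs_div, abs_two]
    rw [e]; linarith
  · refine supOn_le _ hM0 ?_
    intro k hk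
    exact key (j + 1) hj k (Finset.mem_range.1 hk)
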